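/- For each word p = p_d…p_1 over {0,…,k−1} and each y ≥ 0, let d(n; p, y) ∈ {0,1} indicate whether the digit block p appears at position y in the base-k representation of n (i.e., the digits of n at positions y, y+1, …, y+d−1 are p_d, p_{d−1}, …, p_1). Then for e ≥ D, the counting function satisfies the splitting identity d(k^e·m + j; p, y) = d(k^e·m; p, y) + d(j; p, y) for all m ≥ 0, 0 ≤ j ≤ k^e − 1, and y ≤ e − d (respectively y ≥ e), provided the block lies entirely in the low digits or entirely in the high digits; consequently, the sequence a(n) = Σ_{d ≤ D} Σ_{p} Σ_{y≥0} μ_p(y)·d(n; p, y), with μ_p : ℕ → K finitely supported in y for each n, is a k-projective sequence. -/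

import Mathlib

def kProjective (k : ℕ) (K : Type*) [Field K] (a : ℕ → K) : Prop :=
  ∃ d : ℕ, ∀ e : ℕ, ∃ g : Fin d → (ℕ → K),
    ∀ j < k ^ e, (fun n => a (k ^ e * n + j)) ∈ Submodule.span K (Set.range g)

set_option maxHeartbeats 1000000


abbrev Wd (D k : ℕ) := Σ d : Fin (D + 1), Fin (d : ℕ) → Fin k

def dind (K : Type*) [Field K] (k : ℕ) {D : ℕ} (p : Wd D k) (y n : ℕ) : K :=
  if ∀ i : Fin (p.1 : ℕ), n / k ^ (y + (i : ℕ)) % k = (p.2 i : ℕ) then 1 else 0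

lemma digit_high {k : ℕ} (hk : 0 < k) (e t m j : ℕ) (hj : j < k ^ e) :
    (k ^ e * m + j) / k ^ (e + t) % k = m / k ^ t % k := by
  have h1 : (k ^ e * m + j) / k ^ (e + t) = m / k ^ t := by
    rw [pow_add, ← Nat.div_div_eq_div_mul, Nat.mul_add_div (pow_pos hk e),
      Nat.div_eq_of_lt hj, add_zero]
  rw [h1]

lemma digit_low {k : ℕ} (hk : 0 < k) {e t : ℕ} (ht : t < e) (m j : ℕ) :
    (k ^ e * m + j) / k ^ t % k = j / k ^ t % k := by
  obtain ⟨s, rfl⟩ : ∃ s, e = t + (s + 1) := ⟨e - t - 1, by omega⟩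
  rw [pow_add, mul_assoc, Nat.mul_add_div (pow_pos hk t), pow_succ', mul_assoc,
    Nat.mul_add_mod]

def lw (k e : ℕ) {D : ℕ} (p : Wd D k) (y : ℕ) : Wd D k :=
  ⟨⟨min (e - y) (p.1 : ℕ), lt_of_le_of_lt (min_le_right _ _) p.1.2⟩,
   fun i => p.2 ⟨(i : ℕ), (Nat.lt_min.mp i.2).2⟩⟩

def hw (k e : ℕ) {D : ℕ} (p : Wd D k) (y : ℕ) : Wd D k :=
  ⟨⟨min (y + (p.1 : ℕ) - e) (p.1 : ℕ), lt_of_le_of_lt (min_le_right _ _) p.1.2⟩,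
   fun i => p.2 ⟨e - y + (i : ℕ), by have h := Nat.lt_min.mp i.2; omega⟩⟩

lemma dind_low {K : Type*} [Field K] {k : ℕ} (hk : 0 < k) {D : ℕ} (p : Wd D k)
    {y e : ℕ} (hle : y + (p.1 : ℕ) ≤ e) (m j : ℕ) :
    dind K k p y (k ^ e * m + j) = dind K k p y j := by
  simp only [dind]
  refine if_congr (forall_congr' fun i => ?_) rfl rfl
  rw [digit_low hk (show y + (i : ℕ) < e by have := i.2; omega) m j]

lemma dind_high {K : Type*} [Field K] {k : ℕ} (hk : 0 < k) {D : ℕ} (p : Wd D k)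
    (e y m j : ℕ) (hj : j < k ^ e) :
    dind K k p (e + y) (k ^ e * m + j) = dind K k p y m := by
  simp only [dind]
  refine if_congr (forall_congr' fun i => ?_) rfl rfl
  rw [show e + y + (i : ℕ) = e + (y + (i : ℕ)) by omega, digit_high hk e _ m j hj]

lemma dind_straddle {K : Type*} [Field K] {k : ℕ} (hk : 0 < k) {D e y m j : ℕ}
    (p : Wd D k) (hj : j < k ^ e) (hy : y < e) (hye : e < y + (p.1 : ℕ)) :
    dind K k p y (k ^ e * m + j) = dind K k (lw k e p y) y j * dind K k (hw k e p y) 0 m := by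
  simp only [dind, lw, hw]
  by_cases hC : ∀ i : Fin (p.1 : ℕ), (k ^ e * m + j) / k ^ (y + (i : ℕ)) % k = (p.2 i : ℕ)
  · have hA : ∀ i : Fin (min (e - y) (p.1 : ℕ)),
        j / k ^ (y + (i : ℕ)) % k = (p.2 ⟨(i : ℕ), (Nat.lt_min.mp i.2).2⟩ : ℕ) := by
      intro i
      have hi := Nat.lt_min.mp i.2
      rw [← digit_low hk (show y + (i : ℕ) < e by omega) m j]
      exact hC ⟨(i : ℕ), hi.2⟩
    have hB : ∀ i : Fin (min (y + (p.1 : ℕ) - e) (p.1 : ℕ)),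
        m / k ^ (0 + (i : ℕ)) % k
          = (p.2 ⟨e - y + (i : ℕ), by have h := Nat.lt_min.mp i.2; omega⟩ : ℕ) := by
      intro i
      have hi := Nat.lt_min.mp i.2
      rw [zero_add, ← digit_high hk e (i : ℕ) m j hj,
        show e + (i : ℕ) = y + (e - y + (i : ℕ)) by omega]
      exact hC ⟨e - y + (i : ℕ), by omega⟩
    simp only [zero_add] at hB; simp [hA, hB, hC]
  · rw [if_neg hC]
    by_cases hA : ∀ i : Fin (min (e - y) (p.1 : ℕ)),
        j / k ^ (y + (i : ℕ)) % k = (p.2 ⟨(i : ℕ), (Nat.lt_min.mp i.2).2⟩ : ℕ)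
    · by_cases hB : ∀ i : Fin (min (y + (p.1 : ℕ) - e) (p.1 : ℕ)),
          m / k ^ (0 + (i : ℕ)) % k
            = (p.2 ⟨e - y + (i : ℕ), by have h := Nat.lt_min.mp i.2; omega⟩ : ℕ)
      · exfalso; apply hC
        intro i
        by_cases hi : y + (i : ℕ) < e
        · rw [digit_low hk hi m j]
          exact hA ⟨(i : ℕ), by have := i.2; omega⟩
        · have hlt : (y + (i : ℕ) - e) < min (y + (p.1 : ℕ) - e) (p.1 : ℕ) := by
            have := i.2; omega
          have hb := hB ⟨y + (i : ℕ) - e, hlt⟩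
          rw [zero_add] at hb
          rw [show y + (i : ℕ) = e + (y + (i : ℕ) - e) by omega,
            digit_high hk e _ m j hj, hb]
          have hv : e - y + (y + (i : ℕ) - e) = (i : ℕ) := by omega
          simp only [hv, Fin.eta]
      · simp only [zero_add] at hB; simp [hB]
    · simp [hA]

lemma sum_stab {K : Type*} [Field K] {k D : ℕ} (hk : 2 ≤ k) (p : Wd D k) (ν : ℕ → K)
    (hν : (∀ i : Fin (p.1 : ℕ), (p.2 i : ℕ) = 0) → ∀ y, ν y = 0)
    (n : ℕ) {N : ℕ} (hN : n + 1 ≤ N) :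
    ∑ y ∈ Finset.range N, ν y * dind K k p y n
      = ∑ y ∈ Finset.range (n + 1), ν y * dind K k p y n := by
  symm
  apply Finset.sum_subset (Finset.range_subset_range.mpr hN)
  intro y hy hny
  simp only [Finset.mem_range] at hy hny
  have hyn : n < y := by omega
  by_cases hz : ∀ i : Fin (p.1 : ℕ), (p.2 i : ℕ) = 0
  · rw [hν hz y, zero_mul]
  · have hd : dind K k p y n = 0 := by
      rw [dind, if_neg]
      intro h
      apply hz
      intro i
      have h1 : n < k ^ y := lt_trans hyn (Nat.lt_pow_self (n := y) (by omega))
      have h2 : n < k ^ (y + (i : ℕ)) :=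
        lt_of_lt_of_le h1 (Nat.pow_le_pow_right (by omega) (by omega))
      have := h i
      rw [Nat.div_eq_of_lt h2, Nat.zero_mod] at this
      exact this.symm
    rw [hd, mul_zero]

/-- A sequence built from weighted counts of occurrences of digit blocks (words of length
at most `D` over the base-`k` digits) in the base-`k` representation is `k`-projective.
Words are encoded as pairs `⟨d, p⟩` with `d ≤ D` and `p : Fin d → Fin k`; the weight of
the all-zero word (in particular the empty word) is required to vanish, so that for every
`n` only finitely many terms (those with `y ≤ n`) are nonzero and the inner sum over
`y ∈ Finset.range (n + 1)` agrees with the full infinite sum. -/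
theorem digitBlockCount_kProjective {K : Type*} [Field K] {k D : ℕ} (hk : 2 ≤ k)
    (hD : 1 ≤ D) (μ : (Σ d : Fin (D + 1), Fin (d : ℕ) → Fin k) → ℕ → K)
    (hμ : ∀ p : Σ d : Fin (D + 1), Fin (d : ℕ) → Fin k,
      (∀ i : Fin (p.1 : ℕ), (p.2 i : ℕ) = 0) → μ p = 0)
    (a : ℕ → K)
    (haDef : ∀ n : ℕ, a n = ∑ p : Σ d : Fin (D + 1), Fin (d : ℕ) → Fin k,
      ∑ y ∈ Finset.range (n + 1), μ p y *
        (if ∀ i : Fin (p.1 : ℕ), n / k ^ (y + (i : ℕ)) % k = (p.2 i : ℕ) then 1 else 0)) :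
    kProjective k K a := by
  classical
  have hk0 : 0 < k := by omega
  have ha : ∀ n, a n = ∑ p : Wd D k, ∑ y ∈ Finset.range (n + 1), μ p y * dind K k p y n := by
    intro n
    rw [haDef]
    rfl
  refine ⟨Fintype.card (Unit ⊕ Wd D k ⊕ Wd D k), fun e => ?_⟩
  set G : (Unit ⊕ Wd D k ⊕ Wd D k) → (ℕ → K) :=
    Sum.elim (fun _ _ => (1 : K))
      (Sum.elim (fun p m => ∑ y ∈ Finset.range (m + 1), μ p (e + y) * dind K k p y m)
        (fun q m => dind K k q 0 m)) with hG
  refine ⟨G ∘ (Fintype.equivFin _).symm, fun j hj => ?_⟩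
  rw [(Equiv.surjective (Fintype.equivFin _).symm).range_comp G]
  have hdecomp : ∀ m, a (k ^ e * m + j) =
      (∑ p : Wd D k, ∑ y ∈ (Finset.range e).filter (fun y => y + (p.1 : ℕ) ≤ e),
        μ p y * dind K k p y j)
      + (∑ p : Wd D k, ∑ y ∈ (Finset.range e).filter (fun y => ¬ y + (p.1 : ℕ) ≤ e),
        (μ p y * dind K k (lw k e p y) y j) * dind K k (hw k e p y) 0 m)
      + ∑ p : Wd D k, ∑ y ∈ Finset.range (m + 1), μ p (e + y) * dind K k p y m := by
    intro m
    set n := k ^ e * m + j with hn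
    rw [ha, ← Finset.sum_add_distrib, ← Finset.sum_add_distrib]
    apply Finset.sum_congr rfl
    intro p _
    have hμp : (∀ i : Fin (p.1 : ℕ), (p.2 i : ℕ) = 0) → ∀ y, μ p y = 0 := by
      intro hz y; rw [hμ p hz]; rfl
    rw [← sum_stab hk p (μ p) hμp n (N := e + (n + m + 1)) (by omega)]
    rw [Finset.sum_range_add]
    have hhigh : ∑ y ∈ Finset.range (n + m + 1), μ p (e + y) * dind K k p (e + y) n
        = ∑ y ∈ Finset.range (m + 1), μ p (e + y) * dind K k p y m := by
      rw [show (∑ y ∈ Finset.range (n + m + 1), μ p (e + y) * dind K k p (e + y) n)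
          = ∑ y ∈ Finset.range (n + m + 1), μ p (e + y) * dind K k p y m from
        Finset.sum_congr rfl fun y _ => by rw [hn, dind_high hk0 p e y m j hj]]
      exact sum_stab hk p (fun y => μ p (e + y)) (fun hz y => hμp hz _) m (by omega)
    have hlow : ∑ y ∈ Finset.range e, μ p y * dind K k p y n
        = (∑ y ∈ (Finset.range e).filter (fun y => y + (p.1 : ℕ) ≤ e),
            μ p y * dind K k p y j)
          + ∑ y ∈ (Finset.range e).filter (fun y => ¬ y + (p.1 : ℕ) ≤ e),
            (μ p y * dind K k (lw k e p y) y j) * dind K k (hw k e p y) 0 m := by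
      rw [← Finset.sum_filter_add_sum_filter_not (Finset.range e)
        (fun y => y + (p.1 : ℕ) ≤ e) (fun y => μ p y * dind K k p y n)]
      congr 1
      · apply Finset.sum_congr rfl
        intro y hy
        simp only [Finset.mem_filter, Finset.mem_range] at hy
        rw [hn, dind_low hk0 p hy.2 m j]
      · apply Finset.sum_congr rfl
        intro y hy
        simp only [Finset.mem_filter, Finset.mem_range] at hy
        rw [hn, dind_straddle hk0 p hj hy.1 (by omega), mul_assoc]
    rw [hhigh, hlow]
  have hfun : (fun m => a (k ^ e * m + j)) =
      (∑ p : Wd D k, ∑ y ∈ (Finset.range e).filter (fun y => y + (p.1 : ℕ) ≤ e),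
        μ p y * dind K k p y j) • G (Sum.inl ())
      + (∑ p : Wd D k, ∑ y ∈ (Finset.range e).filter (fun y => ¬ y + (p.1 : ℕ) ≤ e),
        (μ p y * dind K k (lw k e p y) y j) • G (Sum.inr (Sum.inr (hw k e p y))))
      + ∑ p : Wd D k, G (Sum.inr (Sum.inl p)) := by
    funext m
    rw [hdecomp m]
    simp only [hG, Sum.elim_inl, Sum.elim_inr, Pi.add_apply, Pi.smul_apply,
      Finset.sum_apply, smul_eq_mul, mul_one]
  rw [hfun]
  refine Submodule.add_mem _ (Submodule.add_mem _ ?_ ?_) ?_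
  · exact Submodule.smul_mem _ _ (Submodule.subset_span ⟨Sum.inl (), rfl⟩)
  · exact Submodule.sum_mem _ fun p _ => Submodule.sum_mem _ fun y _ =>
      Submodule.smul_mem _ _ (Submodule.subset_span ⟨Sum.inr (Sum.inr (hw k e p y)), rfl⟩)
  · exact Submodule.sum_mem _ fun p _ => Submodule.subset_span ⟨Sum.inr (Sum.inl p), rfl⟩
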